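/- Let R be a semiring and ‖·‖ : R → ℝ a sub-multiplicative seminorm: ‖x‖ ≥ 0 for all x, ‖0‖ = 0, ‖1‖ = 1, ‖x + y‖ ≤ ‖x‖ + ‖y‖ and ‖x·y‖ ≤ ‖x‖·‖y‖ for all x, y ∈ R. Then: (a) for every pointed map f : k₊ → n₊ and every φ ∈ HR(k₊), ∑_{y ≠ 0} ‖(HR(f)φ)(y)‖ ≤ ∑_{x ≠ 0} ‖φ(x)‖; in particular if ∑_{x ≠ 0} ‖φ(x)‖ ≤ 1 then ∑_{y ≠ 0} ‖(HR(f)φ)(y)‖ ≤ 1; (b) for all φ ∈ HR(k₊) and ψ ∈ HR(l₊), ∑_{x ≠ 0, y ≠ 0} ‖φ(x)·ψ(y)‖ ≤ (∑_{x ≠ 0} ‖φ(x)‖)·(∑_{y ≠ 0} ‖ψ(y)‖); in particular the unit-ball condition ∑ ‖·‖ ≤ 1 is stable under pushforward and product, so ‖HR‖₁ is an S-subalgebra of HR. -/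

import Mathlib

/-- The Γ-set `HR`: pointed functions `Fin (k+1) → R` with value `0` at the base point `0`. -/
abbrev HObj (R : Type*) [Semiring R] (k : ℕ) : Type _ := {φ : Fin (k + 1) → R // φ 0 = 0}

/-- Pushforward along a (pointed) map `f : k₊ → n₊`: fiberwise sums. -/
def HMap {R : Type*} [Semiring R] {k n : ℕ} (f : Fin (k + 1) → Fin (n + 1))
    (φ : HObj R k) : HObj R n :=
  ⟨fun y => if y = 0 then 0 else ∑ x ∈ Finset.univ.filter (fun x => f x = y), φ.1 x,
    if_pos rfl⟩

/-- for a sub-multiplicative seminorm `N` on a semiring `R`, the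
`ℓ¹`-size does not increase under pushforward, and is sub-multiplicative under the
product; in particular the unit ball condition `∑ N ≤ 1` is stable under both, so
`‖HR‖₁` is an `S`-subalgebra of `HR`. -/
theorem stmt13 {R : Type*} [Semiring R] (N : R → ℝ)
    (hN0 : ∀ x, 0 ≤ N x) (hNz : N 0 = 0) (hN1 : N 1 = 1)
    (hNadd : ∀ x y, N (x + y) ≤ N x + N y) (hNmul : ∀ x y, N (x * y) ≤ N x * N y) :
    -- (a) the ℓ¹-size does not increase under pushforward
    (∀ (k n : ℕ) (f : Fin (k + 1) → Fin (n + 1)), f 0 = 0 → ∀ φ : HObj R k,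
        ∑ y ∈ Finset.univ.filter (fun y : Fin (n + 1) => y ≠ 0), N ((HMap f φ).1 y) ≤
          ∑ x ∈ Finset.univ.filter (fun x : Fin (k + 1) => x ≠ 0), N (φ.1 x)) ∧
    -- (a) in particular, the unit ball is stable under pushforward
    (∀ (k n : ℕ) (f : Fin (k + 1) → Fin (n + 1)), f 0 = 0 → ∀ φ : HObj R k,
        (∑ x ∈ Finset.univ.filter (fun x : Fin (k + 1) => x ≠ 0), N (φ.1 x)) ≤ 1 →
        ∑ y ∈ Finset.univ.filter (fun y : Fin (n + 1) => y ≠ 0), N ((HMap f φ).1 y) ≤ 1) ∧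
    -- (b) sub-multiplicativity for products
    (∀ (k l : ℕ) (φ : HObj R k) (ψ : HObj R l),
        ∑ x ∈ Finset.univ.filter (fun x : Fin (k + 1) => x ≠ 0),
            ∑ y ∈ Finset.univ.filter (fun y : Fin (l + 1) => y ≠ 0), N (φ.1 x * ψ.1 y) ≤
          (∑ x ∈ Finset.univ.filter (fun x : Fin (k + 1) => x ≠ 0), N (φ.1 x)) *
            (∑ y ∈ Finset.univ.filter (fun y : Fin (l + 1) => y ≠ 0), N (ψ.1 y))) ∧
    -- (b) in particular, the unit ball is stable under products
    (∀ (k l : ℕ) (φ : HObj R k) (ψ : HObj R l),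
        (∑ x ∈ Finset.univ.filter (fun x : Fin (k + 1) => x ≠ 0), N (φ.1 x)) ≤ 1 →
        (∑ y ∈ Finset.univ.filter (fun y : Fin (l + 1) => y ≠ 0), N (ψ.1 y)) ≤ 1 →
        ∑ x ∈ Finset.univ.filter (fun x : Fin (k + 1) => x ≠ 0),
            ∑ y ∈ Finset.univ.filter (fun y : Fin (l + 1) => y ≠ 0), N (φ.1 x * ψ.1 y) ≤ 1) := by
  have hNsum : ∀ {ι : Type} (s : Finset ι) (g : ι → R),
      N (∑ x ∈ s, g x) ≤ ∑ x ∈ s, N (g x) := by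
    intro ι s g
    classical
    induction s using Finset.induction with
    | empty => simp [hNz]
    | insert a s h ih =>
      rw [Finset.sum_insert h, Finset.sum_insert h]
      exact (hNadd _ _).trans (by linarith)
  have ha : ∀ (k n : ℕ) (f : Fin (k + 1) → Fin (n + 1)), f 0 = 0 → ∀ φ : HObj R k,
      ∑ y ∈ Finset.univ.filter (fun y : Fin (n + 1) => y ≠ 0), N ((HMap f φ).1 y) ≤
        ∑ x ∈ Finset.univ.filter (fun x : Fin (k + 1) => x ≠ 0), N (φ.1 x) := by
    intro k n f hf φ
    classical
    calc ∑ y ∈ Finset.univ.filter (fun y : Fin (n + 1) => y ≠ 0), N ((HMap f φ).1 y)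
        ≤ ∑ y ∈ Finset.univ.filter (fun y : Fin (n + 1) => y ≠ 0),
            ∑ x ∈ Finset.univ.filter (fun x => f x = y), N (φ.1 x) := by
          apply Finset.sum_le_sum
          intro y hy
          simp only [Finset.mem_filter] at hy
          simp only [HMap, if_neg hy.2]
          exact hNsum _ _
      _ = ∑ x ∈ Finset.univ.filter (fun x => f x ∈ Finset.univ.filter
            (fun y : Fin (n + 1) => y ≠ 0)), N (φ.1 x) :=
          Finset.sum_fiberwise_eq_sum_filter _ _ _ _
      _ = ∑ x ∈ Finset.univ.filter (fun x => f x ≠ 0), N (φ.1 x) := by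
          apply Finset.sum_congr _ fun _ _ => rfl
          apply Finset.filter_congr
          intro x _
          simp
      _ ≤ ∑ x ∈ Finset.univ.filter (fun x : Fin (k + 1) => x ≠ 0), N (φ.1 x) := by
          apply Finset.sum_le_sum_of_subset_of_nonneg
          · intro x hx
            simp only [Finset.mem_filter, Finset.mem_univ, true_and] at *
            intro h; exact hx (h ▸ hf)
          · intro _ _ _; exact hN0 _
  have hb : ∀ (k l : ℕ) (φ : HObj R k) (ψ : HObj R l),
      ∑ x ∈ Finset.univ.filter (fun x : Fin (k + 1) => x ≠ 0),
          ∑ y ∈ Finset.univ.filter (fun y : Fin (l + 1) => y ≠ 0), N (φ.1 x * ψ.1 y) ≤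
        (∑ x ∈ Finset.univ.filter (fun x : Fin (k + 1) => x ≠ 0), N (φ.1 x)) *
          (∑ y ∈ Finset.univ.filter (fun y : Fin (l + 1) => y ≠ 0), N (ψ.1 y)) := by
    intro k l φ ψ
    rw [Finset.sum_mul_sum]
    apply Finset.sum_le_sum
    intro x _
    exact Finset.sum_le_sum fun y _ => hNmul _ _
  refine ⟨ha, fun k n f hf φ h => (ha k n f hf φ).trans h, hb, fun k l φ ψ h1 h2 => ?_⟩
  have := hb k l φ ψ
  have h3 : (∑ x ∈ Finset.univ.filter (fun x : Fin (k + 1) => x ≠ 0), N (φ.1 x)) *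
      (∑ y ∈ Finset.univ.filter (fun y : Fin (l + 1) => y ≠ 0), N (ψ.1 y)) ≤ 1 * 1 :=
    mul_le_mul h1 h2 (Finset.sum_nonneg fun _ _ => hN0 _) (by linarith)
  linarith
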